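/- arXiv:2108.05086 — 2 statements merged into one kernel-verified Lean document; each statement's English description precedes it below -/
import Mathlib

section
/- Suppose a nonnegative random variable T and event {d = i} satisfy, for every 1 ≤ k ≤ k* - m*, the conditional false alarm bound P(k ≤ T < k + m*, d = i) / P(T ≥ k) ≤ β_{i,i}. Then the weighted false alarm probability satisfies Σ_{k≥0} π_k P(T ≤ k, d = i) ≤ β_{i,i} + (1-ρ)^{m*+1}, where π_k = ρ(1-ρ)^k. -/
open MeasureTheory

theorem weighted_pfa_from_conditional
    {Ω : Type*} [MeasurableSpace Ω] (μ : Measure Ω) [IsProbabilityMeasure μ]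
    {ι : Type*} [Fintype ι] (T : Ω → ℕ∞) (d : Ω → ι) (i : ι)
    (hT : ∀ ω, 1 ≤ T ω)
    (ρ β : ℝ) (hρ : 0 < ρ) (hρ1 : ρ < 1) (hβ : 0 < β) (hβ1 : β < 1)
    (mstar kstar : ℕ) (hm : 1 ≤ mstar) (hmk : mstar < kstar)
    (h : ∀ k : ℕ, 1 ≤ k → k ≤ kstar - mstar →
      (μ {ω | (k : ℕ∞) ≤ T ω ∧ T ω < (k + mstar : ℕ∞) ∧ d ω = i}).toReal /
        (μ {ω | (k : ℕ∞) ≤ T ω}).toReal ≤ β) :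
    ∑' k : ℕ, ρ * (1 - ρ) ^ k * (μ {ω | T ω ≤ (k : ℕ∞) ∧ d ω = i}).toReal
      ≤ β + (1 - ρ) ^ (mstar + 1) := by
  set r := 1 - ρ with hrdef
  have hr0 : 0 < r := by simp [hrdef]; linarith
  have hr1 : r < 1 := by simp [hrdef]; linarith
  set n := mstar + 1 with hn
  have hk1 : 1 ≤ kstar - mstar := by omega
  have hden : (μ {ω | ((1 : ℕ) : ℕ∞) ≤ T ω}).toReal = 1 := by
    have huniv : {ω | ((1 : ℕ) : ℕ∞) ≤ T ω} = Set.univ := by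
      ext ω; simpa using hT ω
    rw [huniv]; simp
  have hkey : (μ {ω | ((1 : ℕ) : ℕ∞) ≤ T ω ∧ T ω < ((1 : ℕ) + mstar : ℕ∞) ∧ d ω = i}).toReal
      ≤ β := by
    have := h 1 le_rfl hk1
    rwa [hden, div_one] at this
  have hPβ : ∀ k : ℕ, k ≤ mstar →
      (μ {ω | T ω ≤ (k : ℕ∞) ∧ d ω = i}).toReal ≤ β := by
    intro k hk
    refine le_trans ?_ hkey
    refine ENNReal.toReal_mono (measure_ne_top _ _) (measure_mono ?_)
    rintro ω ⟨h1, h2⟩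
    refine ⟨by simpa using hT ω, ?_, h2⟩
    have hlt : ((k : ℕ) : ℕ∞) < (((1 + mstar : ℕ)) : ℕ∞) := by
      exact Nat.cast_lt.mpr (by omega)
    calc T ω ≤ (k : ℕ∞) := h1
      _ < (((1 + mstar : ℕ)) : ℕ∞) := hlt
      _ = ((1 : ℕ) + mstar : ℕ∞) := by push_cast; ring
  have hP1 : ∀ k : ℕ, (μ {ω | T ω ≤ (k : ℕ∞) ∧ d ω = i}).toReal ≤ 1 := fun k => by
    simpa using ENNReal.toReal_mono ENNReal.one_ne_top prob_le_one
  have hPnn : ∀ k : ℕ, 0 ≤ (μ {ω | T ω ≤ (k : ℕ∞) ∧ d ω = i}).toReal :=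
    fun k => ENNReal.toReal_nonneg
  have hgeo : Summable (fun k : ℕ => r ^ k) := summable_geometric_of_lt_one hr0.le hr1
  set g : ℕ → ℝ := fun k => ρ * r ^ k * (if k ≤ mstar then β else 1) with hg
  have hg_sum : Summable g := by
    apply Summable.of_nonneg_of_le (fun k => ?_) (fun k => ?_) (hgeo.mul_left ρ)
    · have : (0:ℝ) ≤ (if k ≤ mstar then β else 1) := by split <;> linarith
      positivity
    · have : (if k ≤ mstar then β else 1) ≤ 1 := by split <;> linarith
      calc g k ≤ ρ * r ^ k * 1 := by
            apply mul_le_mul_of_nonneg_left this (by positivity)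
        _ = ρ * r ^ k := mul_one _
  have hf_le : ∀ k : ℕ,
      ρ * r ^ k * (μ {ω | T ω ≤ (k : ℕ∞) ∧ d ω = i}).toReal ≤ g k := by
    intro k
    by_cases hk : k ≤ mstar
    · simp only [hg, if_pos hk]
      exact mul_le_mul_of_nonneg_left (hPβ k hk) (by positivity)
    · simp only [hg, if_neg hk]
      exact mul_le_mul_of_nonneg_left (hP1 k) (by positivity)
  have hf_sum : Summable
      (fun k : ℕ => ρ * r ^ k * (μ {ω | T ω ≤ (k : ℕ∞) ∧ d ω = i}).toReal) := by
    apply Summable.of_nonneg_of_le (fun k => ?_) (fun k => ?_) (hgeo.mul_left ρ)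
    · positivity
    · calc _ ≤ ρ * r ^ k * 1 :=
            mul_le_mul_of_nonneg_left (hP1 k) (by positivity)
        _ = ρ * r ^ k := mul_one _
  have step1 : ∑' k : ℕ, ρ * r ^ k * (μ {ω | T ω ≤ (k : ℕ∞) ∧ d ω = i}).toReal
      ≤ ∑' k, g k := Summable.tsum_le_tsum hf_le hf_sum hg_sum
  refine step1.trans ?_
  -- compute tsum g
  have hsplit := Summable.sum_add_tsum_nat_add n hg_sum
  rw [← hsplit]
  have hA : ∑ k ∈ Finset.range n, g k = β * (1 - r ^ n) := by
    have : ∀ k ∈ Finset.range n, g k = β * (ρ * r ^ k) := by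
      intro k hk
      have : k ≤ mstar := by simp [hn] at hk; omega
      simp [hg, this]; ring
    rw [Finset.sum_congr rfl this, ← Finset.mul_sum, ← Finset.mul_sum,
      geom_sum_eq (by linarith : r ≠ 1)]
    have h1 : r - 1 = -ρ := by rw [hrdef]; ring
    rw [h1, div_neg, mul_neg, mul_div_assoc', mul_div_cancel_left₀ _ hρ.ne']
    ring
  have hB : ∑' k : ℕ, g (k + n) = r ^ n := by
    have heq : ∀ k : ℕ, g (k + n) = (ρ * r ^ n) * r ^ k := by
      intro k
      have : ¬ (k + n ≤ mstar) := by omega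
      simp [hg, this, pow_add]; ring
    rw [tsum_congr heq, tsum_mul_left, tsum_geometric_of_lt_one hr0.le hr1]
    have : 1 - r = ρ := by simp [hrdef]
    rw [this]
    field_simp
  rw [hA, hB]
  nlinarith [pow_nonneg hr0.le n, pow_le_one₀ hr0.le hr1.le (n := n)]
end

section
/- Let (ξ_n)_{n≥1} be i.i.d. standard normal random variables and 0 < θ < 1. Define X_0 = x and X_n = (1-θ) X_{n-1} + σ_θ √|X_{n-1}| ξ_n with σ_θ² = θ(1-θ). Then for every integer m ≥ 1 there exists a constant C_m (independent of x, n, θ for θ in a compact subset of (0,1)) such that E_x[X_n^{2m}] ≤ C_m (1 + x^{2m}) for all n ≥ 0 and x ∈ ℝ. -/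
open MeasureTheory ProbabilityTheory

noncomputable def epF (θ x : ℝ) : ℕ → (ℕ → ℝ) → ℝ
  | 0, _ => x
  | (n+1), g => (1 - θ) * epF θ x n g
      + Real.sqrt (θ * (1 - θ)) * Real.sqrt |epF θ x n g| * g (n + 1)

lemma measurable_epF (θ x : ℝ) (n : ℕ) : Measurable (epF θ x n) := by
  induction n with
  | zero => exact measurable_const
  | succ n ih =>
    have h1 : Measurable fun g : ℕ → ℝ => Real.sqrt |epF θ x n g| :=
      (Real.continuous_sqrt.measurable).comp ih.abs
    exact (measurable_const.mul ih).add
      ((measurable_const.mul h1).mul (measurable_pi_apply (n+1)))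

lemma epF_congr (θ x : ℝ) (n : ℕ) {g g' : ℕ → ℝ}
    (h : ∀ i, 1 ≤ i → i ≤ n → g i = g' i) : epF θ x n g = epF θ x n g' := by
  induction n with
  | zero => rfl
  | succ n ih =>
    have h1 : epF θ x n g = epF θ x n g' :=
      ih fun i hi1 hi2 => h i hi1 (hi2.trans (Nat.le_succ n))
    simp only [epF, h1, h (n+1) (Nat.succ_le_succ (Nat.zero_le n)) le_rfl]

lemma two_term_pow (m : ℕ) {η : ℝ} (hη : 0 < η) (u v : ℝ) :
    (u + v) ^ (2*m) ≤ (1+η)^(2*m) * u^(2*m) + (1+η⁻¹)^(2*m) * v^(2*m) := by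
  have habs : (u+v)^(2*m) ≤ (|u|+|v|)^(2*m) := by
    calc (u+v)^(2*m) = |u+v|^(2*m) := by
          rw [← abs_pow, abs_of_nonneg (even_two_mul m |>.pow_nonneg _)]
        _ ≤ (|u|+|v|)^(2*m) := pow_le_pow_left₀ (abs_nonneg _) (abs_add_le u v) _
  have h1 : 0 ≤ u^(2*m) := (even_two_mul m).pow_nonneg _
  have h2 : 0 ≤ v^(2*m) := (even_two_mul m).pow_nonneg _
  rcases le_or_gt |v| (η * |u|) with h | h
  · have : (|u|+|v|)^(2*m) ≤ ((1+η)*|u|)^(2*m) := by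
      apply pow_le_pow_left₀ (by positivity)
      nlinarith [abs_nonneg u, abs_nonneg v]
    calc (u+v)^(2*m) ≤ ((1+η)*|u|)^(2*m) := habs.trans this
      _ = (1+η)^(2*m) * u^(2*m) := by
          rw [mul_pow, ← abs_pow, abs_of_nonneg h1]
      _ ≤ _ := by nlinarith [pow_nonneg (by positivity : (0:ℝ) ≤ 1+η⁻¹) (2*m)]
  · have : (|u|+|v|)^(2*m) ≤ ((1+η⁻¹)*|v|)^(2*m) := by
      apply pow_le_pow_left₀ (by positivity)
      have hu : |u| ≤ η⁻¹ * |v| := by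
        rw [le_inv_mul_iff₀ hη]; exact h.le.trans' (by rw [mul_comm])
      linarith
    calc (u+v)^(2*m) ≤ ((1+η⁻¹)*|v|)^(2*m) := habs.trans this
      _ = (1+η⁻¹)^(2*m) * v^(2*m) := by rw [mul_pow, ← abs_pow, abs_of_nonneg h2]
      _ ≤ _ := by nlinarith [pow_nonneg (by positivity : (0:ℝ) ≤ 1+η) (2*m), h1]

lemma abs_pow_m_le (m : ℕ) {δ : ℝ} (hδ : 0 < δ) (y : ℝ) :
    |y| ^ m ≤ δ * y^(2*m) + 1/δ := by
  have h : y^(2*m) = (|y|^m)^2 := by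
    rw [← pow_mul, mul_comm m 2, (even_two_mul m).pow_abs]
  rw [h]
  set t := |y|^m with ht
  have ht0 : 0 ≤ t := pow_nonneg (abs_nonneg y) m
  have h3 : δ * (δ*t^2 - t + 1/δ) = (δ*t)^2 - δ*t + 1 := by field_simp
  nlinarith [sq_nonneg (2*(δ*t) - 1), hδ, h3]

lemma sqrt_le_one_add {z : ℝ} (hz : 0 ≤ z) : Real.sqrt z ≤ 1 + z := by
  nlinarith [Real.sq_sqrt hz, Real.sqrt_nonneg z, sq_nonneg (Real.sqrt z - 1)]

lemma integrable_abs_pow_gaussian (k : ℕ) :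
    Integrable (fun y : ℝ => |y| ^ k) (gaussianReal 0 1) := by
  rw [gaussianReal_of_var_ne_zero 0 one_ne_zero]
  rw [integrable_withDensity_iff (measurable_gaussianPDF 0 1)
    (Filter.Eventually.of_forall fun y => ENNReal.ofReal_lt_top)]
  have hs : (-1:ℝ) < (k:ℝ) :=
    lt_of_lt_of_le (by norm_num) (Nat.cast_nonneg k)
  have h := (integrable_rpow_mul_exp_neg_mul_sq (b := (1:ℝ)/2) (by norm_num) hs).abs
  have h3 : Integrable (fun x : ℝ => |x| ^ k * Real.exp (-(1/2) * x ^ 2)) volume := by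
    refine h.congr (Filter.Eventually.of_forall fun y => ?_)
    simp only [abs_mul, Real.rpow_natCast, abs_pow, abs_of_pos (Real.exp_pos _)]
  have h4 := h3.const_mul (Real.sqrt (2 * Real.pi))⁻¹
  refine h4.congr (Filter.Eventually.of_forall fun y => ?_)
  simp only [gaussianPDF, gaussianPDFReal]
  rw [ENNReal.toReal_ofReal (by positivity)]
  norm_num
  ring_nf

lemma iIndepFun_of_ae_eq {Ω : Type*} [MeasurableSpace Ω] {μ : Measure Ω}
    {f g : ℕ → Ω → ℝ} (hf : iIndepFun f μ)
    (h : ∀ i, f i =ᵐ[μ] g i) : iIndepFun g μ := by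
  rw [iIndepFun_iff_measure_inter_preimage_eq_mul] at hf ⊢
  intro S sets H
  have hall : ∀ᵐ ω ∂μ, ∀ i, f i ω = g i ω := ae_all_iff.2 h
  have h1 : (⋂ i ∈ S, g i ⁻¹' sets i) =ᵐ[μ] (⋂ i ∈ S, f i ⁻¹' sets i) := by
    rw [Filter.eventuallyEq_set]
    filter_upwards [hall] with ω hω
    simp only [Set.mem_iInter, Set.mem_preimage, hω]
  have h2 : ∀ i, μ (g i ⁻¹' sets i) = μ (f i ⁻¹' sets i) := by
    intro i
    refine measure_congr ?_
    rw [Filter.eventuallyEq_set]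
    filter_upwards [h i] with ω hω
    simp only [Set.mem_preimage, hω]
  rw [measure_congr h1, hf S H]
  exact Finset.prod_congr rfl fun i _ => (h2 i).symm

set_option maxHeartbeats 1000000 in
theorem epidemic_moment_bound
    {Ω : Type*} [MeasurableSpace Ω] (μ : Measure Ω) [IsProbabilityMeasure μ]
    (m : ℕ) (hm : 1 ≤ m) (K : Set ℝ) (hK : IsCompact K) (hKsub : K ⊆ Set.Ioo 0 1) :
    ∃ C : ℝ, 0 < C ∧ ∀ θ ∈ K, ∀ x : ℝ, ∀ ξ : ℕ → Ω → ℝ,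
      iIndepFun ξ μ →
      (∀ n, Measure.map (ξ n) μ = gaussianReal 0 1) →
      ∀ X : ℕ → Ω → ℝ,
        (∀ ω, X 0 ω = x) →
        (∀ n ω, X (n + 1) ω =
          (1 - θ) * X n ω + Real.sqrt (θ * (1 - θ)) * Real.sqrt |X n ω| * ξ (n + 1) ω) →
        ∀ n, ∫ ω, (X n ω) ^ (2 * m) ∂μ ≤ C * (1 + x ^ (2 * m)) := by
  rcases K.eq_empty_or_nonempty with hKe | hKne
  · exact ⟨1, one_pos, by simp [hKe]⟩
  have haK : sInf K ∈ K := hK.sInf_mem hKne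
  set a : ℝ := sInf K with hadef
  have ha : ∀ θ ∈ K, a ≤ θ := fun θ hθ => csInf_le hK.bddBelow hθ
  obtain ⟨ha0, ha1⟩ := hKsub haK
  have hm2 : 2 * m ≠ 0 := by omega
  obtain ⟨M, hMdef⟩ : ∃ v : ℝ, v = ∫ y, |y| ^ (2*m) ∂(gaussianReal 0 1) := ⟨_, rfl⟩
  have hMint : Integrable (fun y : ℝ => |y| ^ (2*m)) (gaussianReal 0 1) :=
    integrable_abs_pow_gaussian _
  have hM0 : 0 ≤ M := by
    rw [hMdef]; exact integral_nonneg fun y => by positivity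
  obtain ⟨ρ, hρdef⟩ : ∃ v : ℝ, v = ((1+a)*(1-a))^(2*m) := ⟨_, rfl⟩
  have hbase0 : (0:ℝ) ≤ (1+a)*(1-a) := by nlinarith
  have hbase1 : (1+a)*(1-a) < 1 := by nlinarith
  have hρ0 : 0 ≤ ρ := by rw [hρdef]; positivity
  have hρ1 : ρ < 1 := by
    rw [hρdef]; exact pow_lt_one₀ hbase0 hbase1 hm2
  obtain ⟨c1, hc1def⟩ : ∃ v : ℝ, v = (1+a⁻¹)^(2*m) := ⟨_, rfl⟩
  have hc1 : 0 < c1 := by rw [hc1def]; positivity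
  obtain ⟨δ, hδdef⟩ : ∃ v : ℝ, v = (1-ρ)/(2*c1*(M+1)) := ⟨_, rfl⟩
  have hδ : 0 < δ := by
    rw [hδdef]; apply div_pos (by linarith); positivity
  obtain ⟨ρ', hρ'def⟩ : ∃ v : ℝ, v = (1+ρ)/2 := ⟨_, rfl⟩
  have hρ'0 : 0 ≤ ρ' := by rw [hρ'def]; linarith
  have hρ'1 : ρ' < 1 := by rw [hρ'def]; linarith
  obtain ⟨B, hBdef⟩ : ∃ v : ℝ, v = c1 * M * (1/δ) := ⟨_, rfl⟩
  have hB0 : 0 ≤ B := by rw [hBdef]; positivity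
  obtain ⟨D, hDdef⟩ : ∃ v : ℝ, v = B/(1-ρ') := ⟨_, rfl⟩
  have hD0 : 0 ≤ D := by rw [hDdef]; apply div_nonneg hB0; linarith
  refine ⟨1 + D, by linarith, ?_⟩
  intro θ hθ x ξ hindep hgauss X hX0 hXrec n
  obtain ⟨hθ0, hθ1⟩ := hKsub hθ
  have haθ : a ≤ θ := ha θ hθ
  -- measurable modifications
  have hξae : ∀ i, AEMeasurable (ξ i) μ := by
    intro i
    by_contra hc
    have h := hgauss i
    rw [Measure.map_of_not_aemeasurable hc] at h
    exact (IsProbabilityMeasure.ne_zero (gaussianReal 0 1)) h.symm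
  set ξ' : ℕ → Ω → ℝ := fun i => (hξae i).mk _ with hξ'def
  have hξ'meas : ∀ i, Measurable (ξ' i) := fun i => (hξae i).measurable_mk
  have hξ'ae : ∀ i, ξ i =ᵐ[μ] ξ' i := fun i => (hξae i).ae_eq_mk
  have hindep' : iIndepFun ξ' μ := iIndepFun_of_ae_eq hindep hξ'ae
  have hgauss' : ∀ i, Measure.map (ξ' i) μ = gaussianReal 0 1 := fun i => by
    rw [← Measure.map_congr (hξ'ae i), hgauss i]
  set X' : ℕ → Ω → ℝ := fun k ω => epF θ x k (fun i => ξ' i ω) with hX'def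
  have hX'meas : ∀ k, Measurable (X' k) := fun k =>
    (measurable_epF θ x k).comp (measurable_pi_lambda _ fun i => hξ'meas i)
  have hX'rec : ∀ k ω, X' (k+1) ω = (1-θ) * X' k ω
      + Real.sqrt (θ*(1-θ)) * Real.sqrt |X' k ω| * ξ' (k+1) ω := fun k ω => rfl
  have hXrep : ∀ k ω, X k ω = epF θ x k (fun i => ξ i ω) := by
    intro k
    induction k with
    | zero => intro ω; simpa [epF] using hX0 ω
    | succ k ih =>
      intro ω
      rw [hXrec k ω, ih ω]
      rfl
  have hXae : ∀ k, X k =ᵐ[μ] X' k := by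
    intro k
    have hall : ∀ᵐ ω ∂μ, ∀ i, ξ i ω = ξ' i ω := ae_all_iff.2 hξ'ae
    filter_upwards [hall] with ω hω
    rw [hXrep k ω]
    exact congrArg _ (funext hω)
  -- independence
  have hIndep : ∀ k, IndepFun (X' k) (ξ' (k+1)) μ := by
    intro k
    have hdisj : Disjoint (Finset.Icc 1 k) ({k+1} : Finset ℕ) := by
      simp only [Finset.disjoint_singleton_right, Finset.mem_Icc]
      omega
    have h := hindep'.indepFun_finset (Finset.Icc 1 k) {k+1} hdisj hξ'meas
    set Φ : ((Finset.Icc 1 k : Finset ℕ) → ℝ) → ℝ :=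
      fun gg => epF θ x k (fun i => if hi : i ∈ Finset.Icc 1 k then gg ⟨i, hi⟩ else 0)
      with hΦdef
    have hΦ : Measurable Φ := by
      apply (measurable_epF θ x k).comp
      apply measurable_pi_lambda
      intro i
      by_cases hi : i ∈ Finset.Icc 1 k
      · simp only [hi, dif_pos]
        exact measurable_pi_apply _
      · simp only [hi, dif_neg, not_false_iff]
        exact measurable_const
    set ev : (({k+1} : Finset ℕ) → ℝ) → ℝ :=
      fun gg => gg ⟨k+1, Finset.mem_singleton_self _⟩ with hevdef
    have hev : Measurable ev := measurable_pi_apply _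
    have h2 := h.comp hΦ hev
    have hfeq : X' k = Φ ∘ (fun ω (i : (Finset.Icc 1 k : Finset ℕ)) => ξ' i ω) := by
      funext ω
      simp only [Function.comp, hΦdef, hX'def]
      refine epF_congr θ x k fun i h1 h2 => ?_
      rw [dif_pos (Finset.mem_Icc.mpr ⟨h1, h2⟩)]
    have hgeq : ξ' (k+1) = ev ∘ (fun ω (i : (({k+1}:Finset ℕ) : Finset ℕ)) => ξ' i ω) := rfl
    rw [hfeq, hgeq]
    exact h2
  -- integrability
  have hξint : ∀ k j : ℕ, Integrable (fun ω => |ξ' k ω| ^ j) μ := by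
    intro k j
    have h1 : Integrable (fun y : ℝ => |y| ^ j) (Measure.map (ξ' k) μ) := by
      rw [hgauss' k]; exact integrable_abs_pow_gaussian j
    exact (integrable_map_measure (measurable_abs.pow_const j).aestronglyMeasurable
      (hξ'meas k).aemeasurable).mp h1
  have hσle : Real.sqrt (θ*(1-θ)) ≤ 1 := by
    have h := Real.sqrt_le_sqrt (show θ*(1-θ) ≤ 1 by nlinarith [sq_nonneg (θ - 1/2)])
    rwa [Real.sqrt_one] at h
  have hX'int : ∀ k j, Integrable (fun ω => |X' k ω| ^ j) μ := by
    intro k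
    induction k with
    | zero =>
      intro j
      have : (fun ω : Ω => |X' 0 ω| ^ j) = fun _ => |x| ^ j := rfl
      rw [this]
      exact integrable_const _
    | succ k ih =>
      intro j
      have hint1 : Integrable (fun ω => (1+|X' k ω|)^j) μ := by
        have he : (fun ω : Ω => (1+|X' k ω|)^j)
            = fun ω => ∑ i ∈ Finset.range (j+1), (j.choose i : ℝ) * |X' k ω| ^ i := by
          funext ω
          rw [add_comm, add_pow]
          refine Finset.sum_congr rfl fun i _ => by ring
        rw [he]
        exact integrable_finset_sum _ fun i _ => (ih i).const_mul _
      have hint2 : Integrable (fun ω => (1+|ξ' (k+1) ω|)^j) μ := by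
        have he : (fun ω : Ω => (1+|ξ' (k+1) ω|)^j)
            = fun ω => ∑ i ∈ Finset.range (j+1), (j.choose i : ℝ) * |ξ' (k+1) ω| ^ i := by
          funext ω
          rw [add_comm, add_pow]
          refine Finset.sum_congr rfl fun i _ => by ring
        rw [he]
        exact integrable_finset_sum _ fun i _ => (hξint (k+1) i).const_mul _
      have hindc : IndepFun (fun ω => (1+|X' k ω|)^j) (fun ω => (1+|ξ' (k+1) ω|)^j) μ :=
        (hIndep k).comp ((measurable_const.add measurable_abs).pow_const j)
          ((measurable_const.add measurable_abs).pow_const j)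
      have hdom := hindc.integrable_mul hint1 hint2
      refine Integrable.mono hdom
        (((hX'meas (k+1)).abs.pow_const j).aestronglyMeasurable)
        (Filter.Eventually.of_forall fun ω => ?_)
      have hstep : |X' (k+1) ω| ≤ (1+|X' k ω|) * (1+|ξ' (k+1) ω|) := by
        rw [hX'rec k ω]
        have e1 := abs_add_le ((1-θ) * X' k ω)
          (Real.sqrt (θ*(1-θ)) * Real.sqrt |X' k ω| * ξ' (k+1) ω)
        rw [abs_mul, abs_mul, abs_mul, abs_of_nonneg (by linarith : (0:ℝ) ≤ 1-θ),
          abs_of_nonneg (Real.sqrt_nonneg (θ*(1-θ))),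
          abs_of_nonneg (Real.sqrt_nonneg |X' k ω|)] at e1
        have hs := sqrt_le_one_add (abs_nonneg (X' k ω))
        have hσ0 := Real.sqrt_nonneg (θ*(1-θ))
        have hξ0 := abs_nonneg (ξ' (k+1) ω)
        have hX0' := abs_nonneg (X' k ω)
        have hs0 := Real.sqrt_nonneg |X' k ω|
        nlinarith [mul_le_mul_of_nonneg_right hs hξ0,
          mul_le_mul_of_nonneg_right (mul_le_mul_of_nonneg_right hσle hs0) hξ0,
          mul_nonneg hX0' hξ0]
      simp only [Pi.mul_apply, Real.norm_eq_abs]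
      rw [abs_of_nonneg (by positivity : (0:ℝ) ≤ |X' (k+1) ω| ^ j),
        abs_of_nonneg (by positivity : (0:ℝ) ≤ (1+|X' k ω|)^j * (1+|ξ' (k+1) ω|)^j)]
      calc |X' (k+1) ω| ^ j ≤ ((1+|X' k ω|) * (1+|ξ' (k+1) ω|))^j :=
            pow_le_pow_left₀ (abs_nonneg _) hstep j
        _ = (1+|X' k ω|)^j * (1+|ξ' (k+1) ω|)^j := mul_pow _ _ _
  have hYint : ∀ k, Integrable (fun ω => X' k ω ^ (2*m)) μ := fun k =>
    (hX'int k (2*m)).congr (Filter.Eventually.of_forall fun ω => (even_two_mul m).pow_abs _)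
  have hξ2mint : ∀ k, Integrable (fun ω => ξ' k ω ^ (2*m)) μ := fun k =>
    (hξint k (2*m)).congr (Filter.Eventually.of_forall fun ω => (even_two_mul m).pow_abs _)
  have hindprod : ∀ k, IndepFun (fun ω => |X' k ω| ^ m) (fun ω => ξ' (k+1) ω ^ (2*m)) μ :=
    fun k => (hIndep k).comp (measurable_abs.pow_const m) (measurable_id.pow_const (2*m))
  have hprod : ∀ k, Integrable (fun ω => |X' k ω| ^ m * ξ' (k+1) ω ^ (2*m)) μ := fun k =>
    (hindprod k).integrable_mul (hX'int k m) (hξ2mint (k+1))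
  have hξMeq : ∀ k, ∫ ω, ξ' k ω ^ (2*m) ∂μ = M := by
    intro k
    have h1 : ∫ ω, ξ' k ω ^(2*m) ∂μ = ∫ y, y^(2*m) ∂(Measure.map (ξ' k) μ) :=
      (integral_map (hξ'meas k).aemeasurable
        ((measurable_id.pow_const (2*m)).aestronglyMeasurable)).symm
    rw [h1, hgauss' k, hMdef]
    exact integral_congr_ae (Filter.Eventually.of_forall fun y =>
      ((even_two_mul m).pow_abs y).symm)
  -- key one-step estimate
  have key : ∀ k, ∫ ω, X' (k+1) ω ^(2*m) ∂μ ≤ ρ' * ∫ ω, X' k ω^(2*m) ∂μ + B := by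
    intro k
    have hE0 : 0 ≤ ∫ ω, X' k ω^(2*m) ∂μ :=
      integral_nonneg fun ω => (even_two_mul m).pow_nonneg _
    have hptw : ∀ ω, X' (k+1) ω ^(2*m)
        ≤ ρ * X' k ω^(2*m) + c1 * (|X' k ω|^m * ξ' (k+1) ω^(2*m)) := by
      intro ω
      rw [hX'rec k ω]
      refine (two_term_pow m ha0 _ _).trans ?_
      have e1 : ((1-θ)*X' k ω)^(2*m) = (1-θ)^(2*m) * X' k ω^(2*m) := mul_pow _ _ _
      have e2 : (Real.sqrt (θ*(1-θ)) * Real.sqrt |X' k ω| * ξ' (k+1) ω)^(2*m)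
          = (θ*(1-θ))^m * (|X' k ω|^m * ξ' (k+1) ω^(2*m)) := by
        have s1 : Real.sqrt (θ*(1-θ)) ^ 2 = θ*(1-θ) :=
          Real.sq_sqrt (by nlinarith [sq_nonneg (θ - 1/2)])
        have s2 : (Real.sqrt |X' k ω|)^2 = |X' k ω| := Real.sq_sqrt (abs_nonneg _)
        rw [mul_pow, mul_pow, pow_mul (Real.sqrt (θ*(1-θ))),
          pow_mul (Real.sqrt |X' k ω|), s1, s2, pow_mul (ξ' (k+1) ω)]
        ring
      rw [e1, e2, ← hc1def]
      have hb1 : (1+a)^(2*m) * (1-θ)^(2*m) ≤ ρ := by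
        rw [hρdef, ← mul_pow]
        exact pow_le_pow_left₀ (by nlinarith) (by nlinarith) _
      have hb2 : (θ*(1-θ))^m ≤ 1 := pow_le_one₀ (by nlinarith) (by nlinarith)
      have hY0 : 0 ≤ X' k ω^(2*m) := (even_two_mul m).pow_nonneg _
      have hZ0 : 0 ≤ |X' k ω|^m * ξ' (k+1) ω^(2*m) :=
        mul_nonneg (by positivity) ((even_two_mul m).pow_nonneg _)
      nlinarith [mul_le_mul_of_nonneg_right hb1 hY0,
        mul_le_mul_of_nonneg_right (mul_le_mul_of_nonneg_left hb2 hc1.le) hZ0]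
    have hrhsint : Integrable
        (fun ω => ρ * X' k ω^(2*m) + c1 * (|X' k ω|^m * ξ' (k+1) ω^(2*m))) μ :=
      ((hYint k).const_mul ρ).add ((hprod k).const_mul c1)
    have h1 := integral_mono (hYint (k+1)) hrhsint hptw
    rw [integral_add ((hYint k).const_mul ρ) ((hprod k).const_mul c1),
      integral_const_mul, integral_const_mul] at h1
    have h2 : ∫ ω, |X' k ω|^m * ξ' (k+1) ω^(2*m) ∂μ
        = (∫ ω, |X' k ω|^m ∂μ) * (∫ ω, ξ' (k+1) ω^(2*m) ∂μ) :=
      (hindprod k).integral_fun_mul_eq_mul_integral (hX'int k m).aestronglyMeasurable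
        (hξ2mint (k+1)).aestronglyMeasurable
    rw [h2, hξMeq (k+1)] at h1
    have hI0 : 0 ≤ ∫ ω, |X' k ω|^m ∂μ := integral_nonneg fun ω => by positivity
    have h3 : ∫ ω, |X' k ω|^m ∂μ ≤ δ * (∫ ω, X' k ω^(2*m) ∂μ) + 1/δ := by
      have hgi : Integrable (fun ω => δ * X' k ω^(2*m) + 1/δ) μ :=
        ((hYint k).const_mul δ).add (integrable_const (1/δ))
      have h4 := integral_mono (hX'int k m) hgi
        (fun ω => abs_pow_m_le m hδ (X' k ω))
      rwa [integral_add ((hYint k).const_mul δ) (integrable_const _),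
        integral_const_mul, integral_const, probReal_univ, smul_eq_mul,
        one_mul] at h4
    have hc1δ : c1 * δ * (M+1) = (1-ρ)/2 := by
      have hc1' : c1 ≠ 0 := ne_of_gt hc1
      have hM1 : M + 1 ≠ 0 := by linarith
      rw [hδdef]
      field_simp
    have hρ'ρ : ρ' - ρ = (1-ρ)/2 := by rw [hρ'def]; ring
    have hBval : B = c1 * M * (1/δ) := hBdef
    nlinarith [mul_le_mul_of_nonneg_left h3 (mul_nonneg hc1.le hM0),
      mul_nonneg (mul_nonneg hc1.le hδ.le) hE0, mul_nonneg hc1.le hM0,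
      mul_le_mul_of_nonneg_right
        (show c1 * δ * M ≤ ρ' - ρ by nlinarith [mul_pos hc1 hδ]) hE0]
  -- induction
  have hx2m : 0 ≤ x^(2*m) := (even_two_mul m).pow_nonneg _
  have bound : ∀ k, ∫ ω, X' k ω^(2*m) ∂μ ≤ x^(2*m) + D := by
    intro k
    induction k with
    | zero =>
      have he : (fun ω : Ω => X' 0 ω ^(2*m)) = fun _ => x^(2*m) := rfl
      rw [he, integral_const, probReal_univ, one_smul]
      linarith
    | succ k ih =>
      have hk := key k
      have hDeq : ρ' * D + B = D := by
        have h5 : 1 - ρ' ≠ 0 := by linarith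
        rw [hDdef]
        field_simp
        ring
      nlinarith [mul_le_mul_of_nonneg_left ih hρ'0]
  calc ∫ ω, X n ω^(2*m) ∂μ = ∫ ω, X' n ω^(2*m) ∂μ :=
        integral_congr_ae ((hXae n).fun_comp (· ^ (2*m)))
    _ ≤ x^(2*m) + D := bound n
    _ ≤ (1 + D) * (1 + x^(2*m)) := by nlinarith
end
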